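/- Let F be a finite field with q elements, let K be an algebraic closure of F, let n ≥ 1, and let f be a monic polynomial of degree n in F[x]. Then the number of pairs ((z_1, …, z_n), σ), where (z_1, …, z_n) ∈ K^n satisfies f = ∏_{j=1}^n (x − z_j) (as polynomials over K) and σ is a permutation of {1, …, n} with z_j^q = z_{σ(j)} for all j, equals n!. -/

import Mathlib

open Polynomial

private lemma exists_comp_perm' {α : Type*} : ∀ {n : ℕ} (a b : Fin n → α),
    Multiset.map a Finset.univ.val = Multiset.map b Finset.univ.val →
    ∃ σ : Equiv.Perm (Fin n), ∀ j, a j = b (σ j) := by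
  intro n
  induction n with
  | zero => exact fun a b _ => ⟨1, fun j => j.elim0⟩
  | succ n ih =>
    intro a b h
    have ha0 : a 0 ∈ Multiset.map b Finset.univ.val := by
      rw [← h]
      exact Multiset.mem_map.2 ⟨0, Finset.mem_univ_val _, rfl⟩
    obtain ⟨k, -, hk⟩ := Multiset.mem_map.1 ha0
    have ha : Multiset.map a Finset.univ.val
        = a 0 ::ₘ Multiset.map (a ∘ Fin.succ) Finset.univ.val := by
      rw [Fin.univ_succAbove n 0, Finset.cons_val, Multiset.map_cons, Finset.map_val,
        Multiset.map_map]
      rfl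
    have hb : Multiset.map b Finset.univ.val
        = b k ::ₘ Multiset.map (b ∘ k.succAbove) Finset.univ.val := by
      rw [Fin.univ_succAbove n k, Finset.cons_val, Multiset.map_cons, Finset.map_val,
        Multiset.map_map]
      rfl
    rw [ha, hb, ← hk] at h
    obtain ⟨τ, hτ⟩ := ih (a ∘ Fin.succ) (b ∘ k.succAbove) ((Multiset.cons_inj_right _).1 h)
    refine ⟨(finSuccEquiv n).trans ((Equiv.optionCongr τ).trans (finSuccEquiv' k).symm), ?_⟩
    intro j
    induction j using Fin.cases with
    | zero => simpa using hk.symm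
    | succ i => simpa using hτ i

/-- Let `F` be a finite field with `q` elements, `K` an algebraic closure
of `F`, and `f` a monic polynomial of degree `n ≥ 1` over `F`. The number of pairs
`((z 0, …, z (n-1)), σ)` with `z ∈ K^n`, `f = ∏ (X - C (z j))` over `K`, and
`z j ^ q = z (σ j)` for all `j`, equals `n!`. -/
theorem ncard_root_orderings_perm (F : Type*) [Field F] [Fintype F] (K : Type*) [Field K]
    [Algebra F K] [IsAlgClosure F K] (n : ℕ) (hn : 1 ≤ n) (f : Polynomial F) (hf : f.Monic)
    (hdeg : f.natDegree = n) :
    Set.ncard {p : (Fin n → K) × Equiv.Perm (Fin n) |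
        Polynomial.map (algebraMap F K) f =
          ∏ j : Fin n, (Polynomial.X - Polynomial.C (p.1 j)) ∧
        ∀ j, p.1 j ^ Fintype.card F = p.1 (p.2 j)} = n.factorial := by
  classical
  haveI : IsAlgClosed K := IsAlgClosure.isAlgClosed F
  -- basic properties of the map of `f` to `K`
  have hPm : (f.map (algebraMap F K)).Monic := hf.map _
  have hPdeg : (f.map (algebraMap F K)).natDegree = n := by rw [hf.natDegree_map _, hdeg]
  have hsplit : (f.map (algebraMap F K)).Splits :=
    IsAlgClosed.splits _
  have hroots : Multiset.card (f.map (algebraMap F K)).roots = n := by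
    rw [← hPdeg, ← (Polynomial.splits_iff_card_roots).1 hsplit]
  have hprod : f.map (algebraMap F K)
      = ((f.map (algebraMap F K)).roots.map fun a => X - C a).prod :=
    hsplit.eq_prod_roots_of_monic hPm
  -- choose an ordering `z₀` of the roots
  have hlen : (f.map (algebraMap F K)).roots.toList.length = n := by
    rw [Multiset.length_toList, hroots]
  set z₀ : Fin n → K :=
    fun j => (f.map (algebraMap F K)).roots.toList.get (Fin.cast hlen.symm j) with hz₀def
  have hmz₀ : Multiset.map z₀ Finset.univ.val = (f.map (algebraMap F K)).roots := by
    have h1 : Multiset.map z₀ Finset.univ.val = ↑(List.ofFn z₀) := by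
      simp [List.ofFn_eq_map, Fin.univ_def]
    rw [h1]
    have h2 : List.ofFn z₀ = (f.map (algebraMap F K)).roots.toList := by
      apply List.ext_getElem (by simp [hlen])
      intro i h1 h2
      simp [hz₀def]
    rw [h2, Multiset.coe_toList]
  -- roots of a product of linear factors
  have rootsprod : ∀ z : Fin n → K,
      (∏ j : Fin n, (X - C (z j))).roots = Multiset.map z Finset.univ.val := by
    intro z
    have h3 : Multiset.map (fun j => X - C (z j)) Finset.univ.val
        = Multiset.map (fun a => X - C a) (Multiset.map z Finset.univ.val) := by
      rw [Multiset.map_map]; rfl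
    rw [Finset.prod_eq_multiset_prod, h3, Polynomial.roots_multiset_prod_X_sub_C]
  have hz₀P : f.map (algebraMap F K) = ∏ j : Fin n, (X - C (z₀ j)) := by
    have h3 : Multiset.map (fun j => X - C (z₀ j)) Finset.univ.val
        = Multiset.map (fun a => X - C a) (Multiset.map z₀ Finset.univ.val) := by
      rw [Multiset.map_map]; rfl
    rw [Finset.prod_eq_multiset_prod, h3, hmz₀]
    exact hprod
  -- orbit characterization
  have orbit_of : ∀ z : Fin n → K, f.map (algebraMap F K) = ∏ j : Fin n, (X - C (z j)) →
      ∃ π : Equiv.Perm (Fin n), ∀ j, z j = z₀ (π j) := by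
    intro z hz
    apply exists_comp_perm'
    rw [← rootsprod z, ← rootsprod z₀, ← hz, ← hz₀P]
  have of_orbit : ∀ π : Equiv.Perm (Fin n),
      f.map (algebraMap F K) = ∏ j : Fin n, (X - C (z₀ (π j))) := by
    intro π
    rw [hz₀P]
    exact (Equiv.prod_comp π fun j => X - C (z₀ j)).symm
  -- Frobenius
  haveI hcharF : CharP F (ringChar F) := ringChar.charP F
  obtain ⟨k, hpp, hcard⟩ := FiniteField.card F (ringChar F)
  haveI : CharP K (ringChar F) := charP_of_injective_algebraMap
    (algebraMap F K).injective (ringChar F)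
  haveI : Fact (ringChar F).Prime := ⟨hpp⟩
  haveI : ExpChar K (ringChar F) := ExpChar.prime hpp
  have hφ : ∀ x : K, iterateFrobenius K (ringChar F) k x = x ^ Fintype.card F := fun x => by
    rw [iterateFrobenius_def, ← hcard]
  have hφalg : ∀ x : F, iterateFrobenius K (ringChar F) k (algebraMap F K x)
      = algebraMap F K x := by
    intro x
    rw [hφ, ← map_pow, FiniteField.pow_card]
  have hPfix : (f.map (algebraMap F K)).map (iterateFrobenius K (ringChar F) k)
      = f.map (algebraMap F K) := by
    rw [Polynomial.map_map]
    congr 1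
    exact RingHom.ext hφalg
  have hfrobz₀ : f.map (algebraMap F K)
      = ∏ j : Fin n, (X - C (z₀ j ^ Fintype.card F)) := by
    calc f.map (algebraMap F K)
        = (∏ j : Fin n, (X - C (z₀ j))).map (iterateFrobenius K (ringChar F) k) := by
          rw [← hz₀P, hPfix]
      _ = ∏ j : Fin n, (X - C (z₀ j ^ Fintype.card F)) := by
          rw [Polynomial.map_prod]
          refine Finset.prod_congr rfl fun j _ => ?_
          rw [Polynomial.map_sub, Polynomial.map_X, Polynomial.map_C, hφ]
  obtain ⟨σ₀, hσ₀⟩ := orbit_of (fun j => z₀ j ^ Fintype.card F) hfrobz₀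
  -- the choice function
  set g : (Fin n → K) → Equiv.Perm (Fin n) := fun z =>
    if h : ∃ π : Equiv.Perm (Fin n), ∀ j, z j = z₀ (π j) then h.choose else 1 with hgdef
  have hg : ∀ z : Fin n → K, (∃ π : Equiv.Perm (Fin n), ∀ j, z j = z₀ (π j)) →
      ∀ j, z j = z₀ (g z j) := by
    intro z h
    simp only [hgdef, dif_pos h]
    exact h.choose_spec
  -- the bijection
  set S : Set ((Fin n → K) × Equiv.Perm (Fin n)) :=
    {p : (Fin n → K) × Equiv.Perm (Fin n) |
        Polynomial.map (algebraMap F K) f =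
          ∏ j : Fin n, (Polynomial.X - Polynomial.C (p.1 j)) ∧
        ∀ j, p.1 j ^ Fintype.card F = p.1 (p.2 j)} with hSdef
  have key : ∀ τ : Equiv.Perm (Fin n),
      ((z₀ ∘ ⇑τ, (g (z₀ ∘ ⇑τ))⁻¹ * τ * (g (z₀ ∘ ⇑τ))⁻¹ * σ₀ * g (z₀ ∘ ⇑τ)) :
        (Fin n → K) × Equiv.Perm (Fin n)) ∈ S := by
    intro τ
    have hπ : ∀ x, z₀ (τ x) = z₀ (g (z₀ ∘ ⇑τ) x) := hg (z₀ ∘ ⇑τ) ⟨τ, fun _ => rfl⟩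
    constructor
    · exact of_orbit τ
    · intro j
      show z₀ (τ j) ^ Fintype.card F
          = (z₀ ∘ ⇑τ) (((g (z₀ ∘ ⇑τ))⁻¹ * τ * (g (z₀ ∘ ⇑τ))⁻¹ * σ₀ * g (z₀ ∘ ⇑τ)) j)
      simp only [Function.comp_apply, Equiv.Perm.mul_apply]
      conv_rhs => rw [hπ, Equiv.Perm.coe_inv (g (z₀ ∘ ⇑τ)), Equiv.apply_symm_apply, hπ, Equiv.apply_symm_apply, ← hσ₀,
        ← hπ]
  let Θ : S → Equiv.Perm (Fin n) := fun x =>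
    g x.1.1 * x.1.2 * (g x.1.1)⁻¹ * σ₀⁻¹ * g x.1.1
  let Θ' : Equiv.Perm (Fin n) → S := fun τ =>
    ⟨(z₀ ∘ ⇑τ, (g (z₀ ∘ ⇑τ))⁻¹ * τ * (g (z₀ ∘ ⇑τ))⁻¹ * σ₀ * g (z₀ ∘ ⇑τ)), key τ⟩
  have hright : ∀ τ, Θ (Θ' τ) = τ := by
    intro τ
    show g (z₀ ∘ ⇑τ) * ((g (z₀ ∘ ⇑τ))⁻¹ * τ * (g (z₀ ∘ ⇑τ))⁻¹ * σ₀ * g (z₀ ∘ ⇑τ))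
      * (g (z₀ ∘ ⇑τ))⁻¹ * σ₀⁻¹ * g (z₀ ∘ ⇑τ) = τ
    group
  have hleft : ∀ x, Θ' (Θ x) = x := by
    rintro ⟨⟨z, σ⟩, hz, hσ⟩
    dsimp only at hz hσ
    have hπ : ∀ x, z x = z₀ (g z x) := hg z (orbit_of z hz)
    have h1 : z₀ ∘ ⇑(g z * σ * (g z)⁻¹ * σ₀⁻¹ * g z) = z := by
      funext j
      show z₀ ((g z * σ * (g z)⁻¹ * σ₀⁻¹ * g z) j) = z j
      simp only [Equiv.Perm.mul_apply]
      rw [← hπ (σ ((g z)⁻¹ (σ₀⁻¹ (g z j)))), ← hσ ((g z)⁻¹ (σ₀⁻¹ (g z j))),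
        hπ ((g z)⁻¹ (σ₀⁻¹ (g z j))), Equiv.Perm.coe_inv (g z), Equiv.apply_symm_apply,
        hσ₀ (σ₀⁻¹ (g z j)), Equiv.Perm.coe_inv σ₀, Equiv.apply_symm_apply, ← hπ j]
    apply Subtype.ext
    show (z₀ ∘ ⇑(Θ ⟨(z, σ), _⟩),
        (g (z₀ ∘ ⇑(Θ ⟨(z, σ), _⟩)))⁻¹ * (Θ ⟨(z, σ), _⟩) * (g (z₀ ∘ ⇑(Θ ⟨(z, σ), _⟩)))⁻¹
          * σ₀ * g (z₀ ∘ ⇑(Θ ⟨(z, σ), _⟩))) = (z, σ)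
    have hΘ : Θ ⟨(z, σ), ⟨hz, hσ⟩⟩ = g z * σ * (g z)⁻¹ * σ₀⁻¹ * g z := rfl
    rw [hΘ, h1]
    refine Prod.ext rfl ?_
    show (g z)⁻¹ * (g z * σ * (g z)⁻¹ * σ₀⁻¹ * g z) * (g z)⁻¹ * σ₀ * g z = σ
    group
  have e : S ≃ Equiv.Perm (Fin n) := ⟨Θ, Θ', hleft, hright⟩
  show Set.ncard S = n.factorial
  rw [← Nat.card_coe_set_eq, Nat.card_congr e, Nat.card_eq_fintype_card,
    Fintype.card_perm, Fintype.card_fin]
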